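/- If T is a tree with at least 2 vertices, then pc(T) + 1 ≤ F_t(T) ≤ 2 pc(T). -/

import Mathlib

/-- The forcing process: vertices that eventually get colored starting from `S`.
A colored vertex with exactly one uncolored neighbor forces that neighbor. -/
inductive SimpleGraph.Forced {V : Type*} (G : SimpleGraph V) (S : Set V) : V → Prop
  | init (v : V) (hv : v ∈ S) : SimpleGraph.Forced G S v
  | force (u w : V) (hu : SimpleGraph.Forced G S u) (hadj : G.Adj u w)
      (huniq : ∀ x, G.Adj u x → x ≠ w → SimpleGraph.Forced G S x) :
      SimpleGraph.Forced G S w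

/-- `S` is a zero forcing set if the forcing process colors every vertex. -/
def SimpleGraph.IsZeroForcingSet {V : Type*} (G : SimpleGraph V) (S : Set V) : Prop :=
  ∀ v, G.Forced S v

/-- The zero forcing number `Z(G)`. -/
noncomputable def SimpleGraph.zeroForcingNumber {V : Type*} (G : SimpleGraph V) : ℕ :=
  sInf {n | ∃ S : Set V, G.IsZeroForcingSet S ∧ S.ncard = n}

/-- A total forcing set: a zero forcing set inducing a subgraph without isolated vertices. -/
def SimpleGraph.IsTotalForcingSet {V : Type*} (G : SimpleGraph V) (S : Set V) : Prop :=
  G.IsZeroForcingSet S ∧ ∀ v ∈ S, ∃ u ∈ S, G.Adj v u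

/-- The total forcing number `F_t(G)`. -/
noncomputable def SimpleGraph.totalForcingNumber {V : Type*} (G : SimpleGraph V) : ℕ :=
  sInf {n | ∃ S : Set V, G.IsTotalForcingSet S ∧ S.ncard = n}

/-- A set of vertices that is the vertex set of a path (as a subgraph) of `G`. -/
def SimpleGraph.IsPathSet {V : Type*} (G : SimpleGraph V) (P : Set V) : Prop :=
  ∃ (u v : V) (w : G.Walk u v), w.IsPath ∧ {x | x ∈ w.support} = P

/-- A path cover: a collection of vertex-disjoint paths partitioning the vertex set. -/
def SimpleGraph.IsPathCover {V : Type*} (G : SimpleGraph V) (P : Set (Set V)) : Prop :=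
  (∀ Q ∈ P, G.IsPathSet Q) ∧ P.PairwiseDisjoint id ∧ ⋃₀ P = Set.univ

/-- The path cover number `pc(G)`. -/
noncomputable def SimpleGraph.pathCoverNumber {V : Type*} (G : SimpleGraph V) : ℕ :=
  sInf {n | ∃ P : Set (Set V), G.IsPathCover P ∧ P.ncard = n}

/-- The matching number `α'(G)`. -/
noncomputable def SimpleGraph.matchingNumber {V : Type*} (G : SimpleGraph V) : ℕ :=
  sSup {n | ∃ M : G.Subgraph, M.IsMatching ∧ M.edgeSet.ncard = n}

/-- A leaf is a vertex with exactly one neighbor. -/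
def SimpleGraph.IsLeaf {V : Type*} (G : SimpleGraph V) (v : V) : Prop :=
  (G.neighborSet v).ncard = 1



namespace SimpleGraph
variable {V : Type*} {G : SimpleGraph V}

lemma forced_mono {S S' : Set V} (h : S ⊆ S') {v} (hv : G.Forced S v) : G.Forced S' v := by
  induction hv with
  | init v hv => exact .init v (h hv)
  | force u w hu hadj huniq ihu ihuniq => exact .force u w ihu hadj ihuniq

lemma forced_trans {S S' : Set V} (hS' : ∀ s ∈ S', G.Forced S s) {v}
    (hv : G.Forced S' v) : G.Forced S v := by
  induction hv with
  | init v hv => exact hS' v hv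
  | force u w hu hadj huniq ihu ihuniq => exact .force u w ihu hadj ihuniq

lemma forced_nonempty {S : Set V} {v} (hv : G.Forced S v) : S.Nonempty := by
  induction hv with
  | init v hv => exact ⟨v, hv⟩
  | force u w hu hadj huniq ihu ihuniq => exact ihu

end SimpleGraph

namespace SimpleGraph
open Classical
variable {V : Type*} {G : SimpleGraph V} {S : Set V}

/-- Stratified forcing: vertices forced within `n` rounds. -/
def ForcedN (G : SimpleGraph V) (S : Set V) : ℕ → V → Prop
  | 0, v => v ∈ S
  | (n+1), v => ForcedN G S n v ∨
      ∃ u, ForcedN G S n u ∧ G.Adj u v ∧ ∀ x, G.Adj u x → x ≠ v → ForcedN G S n x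

lemma forcedN_mono : ∀ {m n : ℕ}, m ≤ n → ∀ {v}, G.ForcedN S m v → G.ForcedN S n v := by
  intro m n h
  induction n with
  | zero => intro v hv; obtain rfl : m = 0 := Nat.le_zero.mp h; exact hv
  | succ n ih =>
    intro v hv
    rcases Nat.le_succ_iff_eq_or_le.mp h with rfl | h'
    · exact hv
    · exact Or.inl (ih h' hv)

lemma forcedN_forced : ∀ {n : ℕ} {v}, G.ForcedN S n v → G.Forced S v := by
  intro n
  induction n with
  | zero => intro v hv; exact .init v hv
  | succ n ih =>
    intro v hv
    rcases hv with hv | ⟨u, hu, hadj, huniq⟩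
    · exact ih hv
    · exact .force u v (ih hu) hadj (fun x hx hx' => ih (huniq x hx hx'))

lemma forced_exists_forcedN [Fintype V] {v} (h : G.Forced S v) : ∃ n, G.ForcedN S n v := by
  induction h with
  | init v hv => exact ⟨0, hv⟩
  | force u w hu hadj huniq ihu ihuniq =>
    choose f hf using ihuniq
    obtain ⟨nu, hnu⟩ := ihu
    classical
    refine ⟨(nu + (Finset.univ.sup fun x : V =>
      if hx : G.Adj u x ∧ x ≠ w then f x hx.1 hx.2 else 0)) + 1,
      Or.inr ⟨u, forcedN_mono (Nat.le_add_right _ _) hnu, hadj, fun x hx hx' => ?_⟩⟩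
    have h1 : (if hx : G.Adj u x ∧ x ≠ w then f x hx.1 hx.2 else 0) ≤
        (Finset.univ.sup fun x : V => if hx : G.Adj u x ∧ x ≠ w then f x hx.1 hx.2 else 0) :=
      Finset.le_sup (f := fun x : V => if hx : G.Adj u x ∧ x ≠ w then f x hx.1 hx.2 else 0)
        (Finset.mem_univ x)
    rw [dif_pos ⟨hx, hx'⟩] at h1
    exact forcedN_mono (le_trans h1 (Nat.le_add_left _ _)) (hf x hx hx')

/-- The round at which a vertex gets forced. -/
noncomputable def rk (G : SimpleGraph V) (S : Set V) (v : V) : ℕ :=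
  sInf {n | G.ForcedN S n v}

lemma rk_spec [Fintype V] (hS : G.IsZeroForcingSet S) (v : V) : G.ForcedN S (rk G S v) v :=
  Nat.sInf_mem (forced_exists_forcedN (hS v))

lemma rk_le {n v} (h : G.ForcedN S n v) : rk G S v ≤ n := Nat.sInf_le h

lemma rk_eq_zero_iff [Fintype V] (hS : G.IsZeroForcingSet S) {v : V} :
    rk G S v = 0 ↔ v ∈ S := by
  constructor
  · intro h
    have := rk_spec hS v
    rw [h] at this
    exact this
  · intro h
    exact Nat.le_zero.mp (rk_le (show G.ForcedN S 0 v from h))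

lemma exists_forcer [Fintype V] (hS : G.IsZeroForcingSet S) {v} (hv : v ∉ S) :
    ∃ u, G.Adj u v ∧ rk G S u < rk G S v ∧
      ∀ x, G.Adj u x → x ≠ v → rk G S x < rk G S v := by
  have hr0 : rk G S v ≠ 0 := fun h => hv ((rk_eq_zero_iff hS).mp h)
  obtain ⟨r, hr⟩ := Nat.exists_eq_succ_of_ne_zero hr0
  have hspec := rk_spec hS v
  rw [hr] at hspec
  rcases hspec with h | ⟨u, hu, hadj, huniq⟩
  · exact absurd (rk_le h) (by omega)
  · exact ⟨u, hadj, by have := rk_le hu; omega,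
      fun x hx hx' => by have := rk_le (huniq x hx hx'); omega⟩

/-- The vertex that forced `v`. -/
noncomputable def forcer (G : SimpleGraph V) (S : Set V) (v : V) : V :=
  if h : ∃ u, G.Adj u v ∧ rk G S u < rk G S v ∧
      ∀ x, G.Adj u x → x ≠ v → rk G S x < rk G S v then Classical.choose h else v

lemma forcer_spec [Fintype V] (hS : G.IsZeroForcingSet S) {v} (hv : v ∉ S) :
    G.Adj (forcer G S v) v ∧ rk G S (forcer G S v) < rk G S v ∧
      ∀ x, G.Adj (forcer G S v) x → x ≠ v → rk G S x < rk G S v := by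
  have h := exists_forcer hS hv
  rw [forcer, dif_pos h]
  exact Classical.choose_spec h

/-- `w` is the (unique) vertex forced by `u`. -/
def IsChild (G : SimpleGraph V) (S : Set V) (u w : V) : Prop :=
  w ∉ S ∧ forcer G S w = u ∧ G.Adj u w

lemma rk_lt_of_isChild [Fintype V] (hS : G.IsZeroForcingSet S) {u w}
    (h : IsChild G S u w) : rk G S u < rk G S w := by
  obtain ⟨hw, hf, _⟩ := h
  have := (forcer_spec hS hw).2.1
  rwa [hf] at this

lemma isChild_unique [Fintype V] (hS : G.IsZeroForcingSet S) {u w₁ w₂}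
    (h₁ : IsChild G S u w₁) (h₂ : IsChild G S u w₂) : w₁ = w₂ := by
  by_contra hne
  obtain ⟨hw₁, hf₁, hadj₁⟩ := h₁
  obtain ⟨hw₂, hf₂, hadj₂⟩ := h₂
  have s₁ := (forcer_spec hS hw₁).2.2
  have s₂ := (forcer_spec hS hw₂).2.2
  rw [hf₁] at s₁; rw [hf₂] at s₂
  exact absurd (s₂ w₁ hadj₁ hne) (not_lt.mpr (le_of_lt (s₁ w₂ hadj₂ (Ne.symm hne))))

/-- The forcing chain starting at `u`, with fuel `n`. -/
noncomputable def chainW (G : SimpleGraph V) (S : Set V) : ℕ → (u : V) → Σ e : V, G.Walk u e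
  | 0, u => ⟨u, Walk.nil⟩
  | (n+1), u =>
    if h : ∃ w, IsChild G S u w then
      ⟨(chainW G S n (Classical.choose h)).1,
        Walk.cons (Classical.choose_spec h).2.2 (chainW G S n (Classical.choose h)).2⟩
    else ⟨u, Walk.nil⟩

lemma rk_le_of_mem_chainW [Fintype V] (hS : G.IsZeroForcingSet S) :
    ∀ (n : ℕ) (u x : V), x ∈ (chainW G S n u).2.support → rk G S u ≤ rk G S x := by
  intro n
  induction n with
  | zero => intro u x hx; simp only [chainW, Walk.support_nil, List.mem_singleton] at hx
            subst hx; rfl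
  | succ n ih =>
    intro u x hx
    by_cases h : ∃ w, IsChild G S u w
    · rw [chainW, dif_pos h] at hx
      have hx' : x = u ∨ x ∈ (chainW G S n (Classical.choose h)).2.support := by
        simpa using hx
      rcases hx' with rfl | hx'
      · rfl
      · exact le_trans (le_of_lt (rk_lt_of_isChild hS (Classical.choose_spec h)))
          (ih _ x hx')
    · rw [chainW, dif_neg h] at hx
      simp only [Walk.support_nil, List.mem_singleton] at hx
      subst hx; rfl

lemma chainW_isPath [Fintype V] (hS : G.IsZeroForcingSet S) :
    ∀ (n : ℕ) (u : V), (chainW G S n u).2.IsPath := by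
  intro n
  induction n with
  | zero => intro u; simp [chainW]
  | succ n ih =>
    intro u
    by_cases h : ∃ w, IsChild G S u w
    · rw [chainW, dif_pos h]
      refine (Walk.cons_isPath_iff _ _).mpr ⟨ih _, fun hu => ?_⟩
      have h1 := rk_le_of_mem_chainW hS n _ u hu
      have h2 := rk_lt_of_isChild hS (Classical.choose_spec h)
      omega
    · rw [chainW, dif_neg h]
      simp

/-- The start of the forcing chain through `v`. -/
noncomputable def chainRoot (G : SimpleGraph V) (S : Set V) (v : V) : V :=
  if h : v ∉ S ∧ rk G S (forcer G S v) < rk G S v then chainRoot G S (forcer G S v) else v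
  termination_by rk G S v
  decreasing_by exact h.2

lemma chainRoot_of_mem {v : V} (h : v ∈ S) : chainRoot G S v = v := by
  rw [chainRoot, dif_neg]; tauto

lemma chainRoot_of_not_mem [Fintype V] (hS : G.IsZeroForcingSet S) {v : V} (h : v ∉ S) :
    chainRoot G S v = chainRoot G S (forcer G S v) := by
  rw [chainRoot, dif_pos ⟨h, (forcer_spec hS h).2.1⟩]

lemma chainRoot_mem [Fintype V] (hS : G.IsZeroForcingSet S) (v : V) :
    chainRoot G S v ∈ S := by
  by_cases h : v ∈ S
  · rwa [chainRoot_of_mem h]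
  · rw [chainRoot_of_not_mem hS h]
    have := (forcer_spec hS h).2.1
    exact chainRoot_mem hS (forcer G S v)
  termination_by rk G S v
  decreasing_by exact this

lemma chainRoot_eq_of_mem_chainW [Fintype V] (hS : G.IsZeroForcingSet S) :
    ∀ (n : ℕ) (u x : V), x ∈ (chainW G S n u).2.support →
      chainRoot G S x = chainRoot G S u := by
  intro n
  induction n with
  | zero => intro u x hx; simp only [chainW, Walk.support_nil, List.mem_singleton] at hx
            subst hx; rfl
  | succ n ih =>
    intro u x hx
    by_cases h : ∃ w, IsChild G S u w
    · rw [chainW, dif_pos h] at hx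
      have hx' : x = u ∨ x ∈ (chainW G S n (Classical.choose h)).2.support := by
        simpa using hx
      rcases hx' with rfl | hx'
      · rfl
      · rw [ih _ x hx']
        obtain ⟨hc1, hc2, _⟩ := Classical.choose_spec h
        rw [chainRoot_of_not_mem hS hc1, hc2]
    · rw [chainW, dif_neg h] at hx
      simp only [Walk.support_nil, List.mem_singleton] at hx
      subst hx; rfl

lemma mem_chainW_of_isChild [Fintype V] (hS : G.IsZeroForcingSet S) :
    ∀ (n : ℕ) (s u w : V), IsChild G S u w → u ∈ (chainW G S n s).2.support →
      rk G S w ≤ rk G S s + n → w ∈ (chainW G S n s).2.support := by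
  intro n
  induction n with
  | zero =>
    intro s u w hc hu hrk
    simp [chainW] at hu; subst hu
    exact absurd (rk_lt_of_isChild hS hc) (by omega)
  | succ n ih =>
    intro s u w hc hu hrk
    by_cases h : ∃ w, IsChild G S s w
    · rw [chainW, dif_pos h] at hu ⊢
      set c := Classical.choose h with hc'
      have hu' : u = s ∨ u ∈ (chainW G S n c).2.support := by simpa using hu
      have hgoal : (Walk.cons (Classical.choose_spec h).2.2 (chainW G S n c).2).support
          = s :: (chainW G S n c).2.support := Walk.support_cons _ _
      rcases hu' with rfl | hu'
      · have hwc : w = c := isChild_unique hS hc (Classical.choose_spec h)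
        rw [hwc]
        show c ∈ (Walk.cons (Classical.choose_spec h).2.2 (chainW G S n c).2).support
        rw [Walk.support_cons]
        exact List.mem_cons.mpr (Or.inr (Walk.start_mem_support _))
      · show w ∈ (Walk.cons (Classical.choose_spec h).2.2 (chainW G S n c).2).support
        rw [Walk.support_cons]
        refine List.mem_cons.mpr (Or.inr (ih c u w hc hu' ?_))
        have hlt := rk_lt_of_isChild hS (Classical.choose_spec h)
        rw [← hc'] at hlt
        omega
    · rw [chainW, dif_neg h] at hu
      simp only [Walk.support_nil, List.mem_singleton] at hu
      subst hu
      exact absurd hc (fun hc => h ⟨w, hc⟩)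

lemma mem_chainW_chainRoot [Fintype V] (hS : G.IsZeroForcingSet S) (N : ℕ)
    (hN : ∀ x, rk G S x ≤ N) (v : V) :
    v ∈ (chainW G S N (chainRoot G S v)).2.support := by
  by_cases h : v ∈ S
  · rw [chainRoot_of_mem h]; exact Walk.start_mem_support _
  · rw [chainRoot_of_not_mem hS h]
    have hlt := (forcer_spec hS h).2.1
    have ih := mem_chainW_chainRoot hS N hN (forcer G S v)
    exact mem_chainW_of_isChild hS N _ _ v ⟨h, rfl, (forcer_spec hS h).1⟩ ih
      (le_trans (hN v) (Nat.le_add_left _ _))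
  termination_by rk G S v
  decreasing_by exact hlt

end SimpleGraph

namespace SimpleGraph
variable {V : Type*} {G : SimpleGraph V}

lemma exists_cover_of_totalForcingSet [Fintype V] [Nonempty V] {S : Set V}
    (hS : G.IsTotalForcingSet S) :
    ∃ P : Set (Set V), G.IsPathCover P ∧ P.ncard + 1 ≤ S.ncard := by
  classical
  have hzf := hS.1
  have hSne : S.Nonempty := forced_nonempty (hzf (Classical.arbitrary V))
  obtain ⟨a, ha⟩ := hSne
  obtain ⟨b, hb, hab⟩ := hS.2 a ha
  set N := Finset.univ.sup (rk G S) with hNdef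
  have hN : ∀ x, rk G S x ≤ N := fun x => Finset.le_sup (Finset.mem_univ x)
  set F : V → Set V := fun s => {x | x ∈ (chainW G S N s).2.support} with hF
  have hroot : ∀ v, v ∈ F (chainRoot G S v) := fun v => mem_chainW_chainRoot hzf N hN v
  have hrooteq : ∀ s x, x ∈ F s → chainRoot G S x = chainRoot G S s :=
    fun s x hx => chainRoot_eq_of_mem_chainW hzf N s x hx
  have hdisj : ∀ s₁ ∈ S, ∀ s₂ ∈ S, s₁ ≠ s₂ → Disjoint (F s₁) (F s₂) := by
    intro s₁ h₁ s₂ h₂ hne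
    rw [Set.disjoint_left]
    intro x hx₁ hx₂
    have e₁ := hrooteq s₁ x hx₁
    have e₂ := hrooteq s₂ x hx₂
    rw [chainRoot_of_mem h₁] at e₁
    rw [chainRoot_of_mem h₂] at e₂
    exact hne (e₁ ▸ e₂)
  -- the merged walk
  set WA := (chainW G S N a).2 with hWA
  set WB := (chainW G S N b).2 with hWB
  set W := WA.reverse.append (Walk.cons hab WB) with hW
  have hWsup : ∀ x, x ∈ W.support ↔ x ∈ F a ∪ F b := by
    intro x
    rw [hW, Walk.mem_support_append_iff]
    constructor
    · rintro (h | h)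
      · exact Or.inl (by rwa [Walk.support_reverse, List.mem_reverse] at h)
      · rw [Walk.support_cons] at h
        rcases List.mem_cons.mp h with rfl | h
        · exact Or.inl (Walk.start_mem_support _)
        · exact Or.inr h
    · rintro (h | h)
      · exact Or.inl (by rwa [Walk.support_reverse, List.mem_reverse])
      · right; rw [Walk.support_cons]; exact List.mem_cons.mpr (Or.inr h)
  have hdisjAB : Disjoint (F a) (F b) := hdisj a ha b hb hab.ne
  have hWpath : W.IsPath := by
    rw [Walk.isPath_def, hW, Walk.support_append, List.nodup_append]
    refine ⟨by
        rw [Walk.support_reverse]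
        exact List.nodup_reverse.mpr (chainW_isPath hzf N a).support_nodup,
      by
        rw [Walk.support_cons, List.tail_cons]
        exact (chainW_isPath hzf N b).support_nodup,
      ?_⟩
    intro x hx x' hx' hxx'
    rw [Walk.support_reverse, List.mem_reverse] at hx
    rw [Walk.support_cons, List.tail_cons] at hx'
    subst hxx'
    exact Set.disjoint_left.mp hdisjAB hx hx'
  set M : Set V := F a ∪ F b with hM
  set P : Set (Set V) := (F '' (S \ {a, b})) ∪ {M} with hP
  have hcover : G.IsPathCover P := by
    refine ⟨?_, ?_, ?_⟩
    · rintro Q hQ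
      rcases hQ with ⟨s, _, rfl⟩ | hQ
      · exact ⟨s, _, (chainW G S N s).2, chainW_isPath hzf N s, rfl⟩
      · rw [Set.mem_singleton_iff] at hQ
        subst hQ
        exact ⟨_, _, W, hWpath, Set.ext fun x => hWsup x⟩
    · rintro Q hQ R hR hne
      have key : ∀ X ∈ P, ∀ Y ∈ P, X ≠ Y → Disjoint X Y := by
        rintro X hX Y hY hXY
        rcases hX with ⟨s₁, hs₁, rfl⟩ | hX
        · rcases hY with ⟨s₂, hs₂, rfl⟩ | hY
          · rcases eq_or_ne s₁ s₂ with rfl | hss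
            · exact absurd rfl hXY
            · exact hdisj s₁ hs₁.1 s₂ hs₂.1 hss
          · rw [Set.mem_singleton_iff] at hY; subst hY
            rw [hM, Set.disjoint_union_right]
            constructor
            · exact hdisj s₁ hs₁.1 a ha (fun h => hs₁.2 (by simp [h]))
            · exact hdisj s₁ hs₁.1 b hb (fun h => hs₁.2 (by simp [h]))
        · rw [Set.mem_singleton_iff] at hX; subst hX
          rcases hY with ⟨s₂, hs₂, rfl⟩ | hY
          · rw [hM, Set.disjoint_union_left]
            constructor
            · exact hdisj a ha s₂ hs₂.1 (fun h => hs₂.2 (by simp [← h]))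
            · exact hdisj b hb s₂ hs₂.1 (fun h => hs₂.2 (by simp [← h]))
          · rw [Set.mem_singleton_iff] at hY; subst hY
            exact absurd rfl hXY
      exact key Q hQ R hR hne
    · rw [Set.eq_univ_iff_forall]
      intro v
      have hv := hroot v
      have hrS := chainRoot_mem hzf v
      rcases eq_or_ne (chainRoot G S v) a with hva | hva
      · exact Set.mem_sUnion.mpr ⟨M, Or.inr rfl, Or.inl (hva ▸ hv)⟩
      rcases eq_or_ne (chainRoot G S v) b with hvb | hvb
      · exact Set.mem_sUnion.mpr ⟨M, Or.inr rfl, Or.inr (hvb ▸ hv)⟩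
      · exact Set.mem_sUnion.mpr ⟨F (chainRoot G S v),
          Or.inl ⟨_, ⟨hrS, by simp [hva, hvb]⟩, rfl⟩, hv⟩
  refine ⟨P, hcover, ?_⟩
  have h1 : P.ncard ≤ (F '' (S \ {a, b})).ncard + 1 := by
    have hPe : P = insert M (F '' (S \ {a, b})) := by rw [hP, Set.union_singleton]
    rw [hPe]
    exact Set.ncard_insert_le _ _
  have h2 : (F '' (S \ {a, b})).ncard ≤ (S \ {a, b}).ncard :=
    Set.ncard_image_le (S \ {a, b}).toFinite
  have h3 : (S \ {a, b}).ncard = S.ncard - 2 := by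
    rw [Set.ncard_diff (show ({a, b} : Set V) ⊆ S by simp [Set.insert_subset_iff, ha, hb])
      (Set.toFinite _), Set.ncard_pair hab.ne]
  have h4 : 2 ≤ S.ncard := by
    have : ({a, b} : Set V).ncard ≤ S.ncard :=
      Set.ncard_le_ncard (by simp [Set.insert_subset_iff, ha, hb]) S.toFinite
    rwa [Set.ncard_pair hab.ne] at this
  omega

end SimpleGraph

namespace SimpleGraph
variable {V : Type*} {G : SimpleGraph V} [DecidableEq V]

lemma walk_eq_of_isPath (ha : G.IsAcyclic) {u v : V} {p q : G.Walk u v}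
    (hp : p.IsPath) (hq : q.IsPath) : p = q :=
  congrArg Subtype.val (ha.path_unique ⟨p, hp⟩ ⟨q, hq⟩)

/-- `A` is connected within itself. -/
def ConnIn (G : SimpleGraph V) (A : Set V) : Prop :=
  ∀ ⦃x⦄, x ∈ A → ∀ ⦃y⦄, y ∈ A → ∃ w : G.Walk x y, ∀ z ∈ w.support, z ∈ A

lemma connIn_of_isPathSet {Q : Set V} (h : G.IsPathSet Q) : G.ConnIn Q := by
  obtain ⟨a, b, w, hw, rfl⟩ := h
  intro x hx y hy
  refine ⟨(w.takeUntil x hx).reverse.append (w.takeUntil y hy), fun z hz => ?_⟩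
  rw [Walk.mem_support_append_iff] at hz
  rcases hz with hz | hz
  · rw [Walk.support_reverse, List.mem_reverse] at hz
    exact Walk.support_takeUntil_subset _ _ hz
  · exact Walk.support_takeUntil_subset _ _ hz

lemma ConnIn.union {A B : Set V} (hA : G.ConnIn A) (hB : G.ConnIn B) {a b : V}
    (haA : a ∈ A) (hbB : b ∈ B) (hab : G.Adj a b) : G.ConnIn (A ∪ B) := by
  have key : ∀ x ∈ A, ∀ y ∈ B, ∃ w : G.Walk x y, ∀ z ∈ w.support, z ∈ A ∪ B := by
    intro x hx y hy
    obtain ⟨w₁, hw₁⟩ := hA hx haA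
    obtain ⟨w₂, hw₂⟩ := hB hbB hy
    refine ⟨w₁.append (Walk.cons hab w₂), fun z hz => ?_⟩
    rw [Walk.mem_support_append_iff] at hz
    rcases hz with hz | hz
    · exact Or.inl (hw₁ z hz)
    · rw [Walk.support_cons] at hz
      rcases List.mem_cons.mp hz with rfl | hz
      · exact Or.inl haA
      · exact Or.inr (hw₂ z hz)
  rintro x (hx | hx) y (hy | hy)
  · obtain ⟨w, hw⟩ := hA hx hy
    exact ⟨w, fun z hz => Or.inl (hw z hz)⟩
  · exact key x hx y hy
  · obtain ⟨w, hw⟩ := key y hy x hx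
    exact ⟨w.reverse, fun z hz => hw z (by rwa [Walk.support_reverse, List.mem_reverse] at hz)⟩
  · obtain ⟨w, hw⟩ := hB hx hy
    exact ⟨w, fun z hz => Or.inr (hw z hz)⟩

lemma cross_unique (ha : G.IsAcyclic) {A B : Set V} (hAB : Disjoint A B)
    (hA : G.ConnIn A) (hB : G.ConnIn B) {a₁ b₁ a₂ b₂ : V}
    (ha₁ : a₁ ∈ A) (hb₁ : b₁ ∈ B) (ha₂ : a₂ ∈ A) (hb₂ : b₂ ∈ B)
    (h₁ : G.Adj a₁ b₁) (h₂ : G.Adj a₂ b₂) : a₁ = a₂ ∧ b₁ = b₂ := by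
  obtain ⟨wA, hwA⟩ := hA ha₁ ha₂
  obtain ⟨wB, hwB⟩ := hB hb₂ hb₁
  set W := wA.append (Walk.cons h₂ wB) with hW
  have hb : W.bypass = Walk.cons h₁ Walk.nil :=
    walk_eq_of_isPath ha W.bypass_isPath (by simp [Walk.isPath_def, h₁.ne])
  have hmem : s(a₁, b₁) ∈ W.edges := Walk.edges_bypass_subset _ (by rw [hb]; simp)
  rw [hW, Walk.edges_append, Walk.edges_cons] at hmem
  rcases List.mem_append.mp hmem with hmem | hmem
  · exact absurd (Walk.snd_mem_support_of_mem_edges _ hmem)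
      (fun h => Set.disjoint_left.mp hAB (hwA _ h) hb₁)
  rcases List.mem_cons.mp hmem with hmem | hmem
  · rw [Sym2.eq_iff] at hmem
    rcases hmem with h | ⟨h1', _⟩
    · exact h
    · exact absurd (show a₁ ∈ B from h1'.symm ▸ hb₂)
        (fun h => Set.disjoint_left.mp hAB ha₁ h)
  · exact absurd (Walk.fst_mem_support_of_mem_edges _ hmem)
      (fun h => Set.disjoint_left.mp hAB ha₁ (hwB _ h))

/-- In an acyclic graph, a vertex strictly before `x` on a path cannot be adjacent
to a support vertex that is not in the initial segment. -/
lemma no_chord (ha : G.IsAcyclic) {u v x z y : V} {w : G.Walk u v} (hw : w.IsPath)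
    (hx : x ∈ w.support) (hz : z ∈ (w.takeUntil x hx).support) (hzx : z ≠ x)
    (hy : y ∈ w.support) (hy' : y ∉ (w.takeUntil x hx).support)
    (hadj : G.Adj z y) : False := by
  have hzw : z ∈ w.support := Walk.support_takeUntil_subset _ _ hz
  have hysplit : y ∈ (w.dropUntil x hx).support := by
    have hspec := w.take_spec hx
    have : y ∈ ((w.takeUntil x hx).append (w.dropUntil x hx)).support := by
      rw [hspec]; exact hy
    rw [Walk.mem_support_append_iff] at this
    tauto
  set w₂ := ((w.takeUntil x hx).dropUntil z hz).append ((w.dropUntil x hx).takeUntil y hysplit)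
    with hw₂
  have hbyp : w₂.bypass = Walk.cons hadj Walk.nil :=
    walk_eq_of_isPath ha w₂.bypass_isPath (by simp [Walk.isPath_def, hadj.ne])
  have hmem : s(z, y) ∈ w₂.edges := Walk.edges_bypass_subset _ (by rw [hbyp]; simp)
  rw [hw₂, Walk.edges_append] at hmem
  rcases List.mem_append.mp hmem with hmem | hmem
  · have : s(z, y) ∈ (w.takeUntil x hx).edges := Walk.edges_dropUntil_subset _ _ hmem
    exact hy' (Walk.snd_mem_support_of_mem_edges _ this)
  · have hmem' : s(z, y) ∈ (w.dropUntil x hx).edges := Walk.edges_takeUntil_subset _ _ hmem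
    have hzdrop : z ∈ (w.dropUntil x hx).support := Walk.fst_mem_support_of_mem_edges _ hmem'
    -- z is in both the take part and the drop part, so z = x
    have hnodup : w.support.Nodup := hw.support_nodup
    have hspec := w.take_spec hx
    have : ((w.takeUntil x hx).append (w.dropUntil x hx)).support.Nodup := by
      rw [hspec]; exact hnodup
    rw [Walk.support_append, List.nodup_append] at this
    have hzx' : z ∈ (w.dropUntil x hx).support.tail → False := fun h => this.2.2 z hz z h rfl
    have : z = x := by
      have := (w.dropUntil x hx).support_eq_cons
      rw [this] at hzdrop
      rcases List.mem_cons.mp hzdrop with h | h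
      · exact h
      · exact absurd h (fun h => hzx' (by rwa [(w.dropUntil x hx).support_eq_cons,
          List.tail_cons]))
    exact hzx this

/-- Forcing propagates along a path whose off-path neighbours are already forced. -/
lemma force_along (ha : G.IsAcyclic) {S : Set V} :
    ∀ {u v : V} (w : G.Walk u v), w.IsPath → G.Forced S u →
      (∀ z ∈ w.support, z ≠ v → ∀ y, G.Adj z y → y ∈ w.support ∨ G.Forced S y) →
      ∀ z ∈ w.support, G.Forced S z := by
  intro u v w
  induction w with
  | nil =>
    intro _ hu _ z hz
    rw [Walk.support_nil, List.mem_singleton] at hz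
    subst hz; exact hu
  | @cons u u' v h p ih =>
    intro hp hu hcond z hz
    have hunv : u ≠ v := fun he => ((Walk.cons_isPath_iff _ _).mp hp).2
      (he ▸ Walk.end_mem_support p)
    have hu'forced : G.Forced S u' := by
      refine .force u u' hu h (fun y hy hne => ?_)
      rcases hcond u (Walk.start_mem_support _) hunv y hy with hmem | hf
      · rw [Walk.support_cons] at hmem
        rcases List.mem_cons.mp hmem with rfl | hmem
        · exact absurd rfl hy.ne'
        · -- y ∈ p.support, y ≠ u' : chord, contradiction
          exfalso
          have hyp : y ∈ p.support := hmem
          have hp' : (p.takeUntil y hyp).IsPath :=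
            ((Walk.cons_isPath_iff _ _).mp hp).1.takeUntil _
          have hpath1 : (Walk.cons h (p.takeUntil y hyp)).IsPath := by
            rw [Walk.cons_isPath_iff]
            exact ⟨hp', fun hmem' => ((Walk.cons_isPath_iff _ _).mp hp).2
              (Walk.support_takeUntil_subset _ _ hmem')⟩
          have hpath2 : (Walk.cons hy Walk.nil : G.Walk u y).IsPath := by
            simp [Walk.isPath_def, hy.ne]
          have heq := walk_eq_of_isPath ha hpath1 hpath2
          have : u' = y := by
            have := congrArg (fun q : G.Walk u y => q.getVert 1) heq
            simpa [Walk.getVert_cons_succ, Walk.getVert_zero] using this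
          exact hne this.symm
      · exact hf
    rw [Walk.support_cons] at hz
    rcases List.mem_cons.mp hz with rfl | hz
    · exact hu
    · refine ih ((Walk.cons_isPath_iff _ _).mp hp).1 hu'forced ?_ z hz
      intro z' hz' hz'v y hy
      rcases hcond z' (by rw [Walk.support_cons]; exact List.mem_cons.mpr (Or.inr hz'))
          hz'v y hy with hmem | hf
      · rw [Walk.support_cons] at hmem
        rcases List.mem_cons.mp hmem with rfl | hmem
        · exact Or.inr hu
        · exact Or.inl hmem
      · exact Or.inr hf

end SimpleGraph

namespace SimpleGraph
variable {V : Type*} {G : SimpleGraph V} [DecidableEq V]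

/-- Cross pairs from `L` to the rest of the family. -/
def crossPairs (G : SimpleGraph V) (ℒ : Set (Set V)) (L : Set V) : Set (V × V) :=
  {p | p.1 ∈ L ∧ p.2 ∈ ⋃₀ (ℒ \ {L}) ∧ G.Adj p.1 p.2}

lemma leaf_exists (ha : G.IsAcyclic) :
    ∀ (n : ℕ) (ℒ : Set (Set V)), ℒ.Finite → ℒ.ncard ≤ n →
      ℒ.PairwiseDisjoint id → (∀ L ∈ ℒ, G.ConnIn L) → (∀ L ∈ ℒ, L.Nonempty) →
      ℒ.Nonempty → ∃ L ∈ ℒ, (crossPairs G ℒ L).Subsingleton := by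
  intro n
  induction n with
  | zero =>
    intro ℒ hfin hn _ _ _ hne
    exact absurd ((Set.ncard_eq_zero hfin).mp (Nat.le_zero.mp hn))
      (Set.nonempty_iff_ne_empty.mp hne)
  | succ n ih =>
    intro ℒ hfin hn hdisj hconn hnonE hne
    obtain ⟨L0, hL0⟩ := hne
    by_cases hsub : (crossPairs G ℒ L0).Subsingleton
    · exact ⟨L0, hL0, hsub⟩
    rw [Set.not_subsingleton_iff] at hsub
    obtain ⟨p, hp, q, hq, hpq⟩ := hsub
    obtain ⟨hp1, hp2, hp3⟩ := hp
    obtain ⟨hq1, hq2, hq3⟩ := hq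
    obtain ⟨M1, hM1mem, hyM1⟩ := hp2
    have hM1ℒ : M1 ∈ ℒ := hM1mem.1
    have hM1ne : M1 ≠ L0 := by simpa using hM1mem.2
    have hdisj01 : Disjoint L0 M1 := hdisj hL0 hM1ℒ (Ne.symm hM1ne)
    have hq2' : q.2 ∉ M1 := by
      intro hq2M
      obtain ⟨he1, he2⟩ := cross_unique ha hdisj01 (hconn _ hL0) (hconn _ hM1ℒ)
        hp1 hyM1 hq1 hq2M hp3 hq3
      exact hpq (Prod.ext he1 he2)
    set Lm := L0 ∪ M1 with hLm
    set ℒ' := insert Lm (ℒ \ {L0, M1}) with hℒ'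
    have hmergedConn : G.ConnIn Lm := (hconn _ hL0).union (hconn _ hM1ℒ) hp1 hyM1 hp3
    have hL0M1 : ({L0, M1} : Set (Set V)) ⊆ ℒ := by
      intro X hX; rcases hX with rfl | hX
      · exact hL0
      · rw [Set.mem_singleton_iff] at hX; exact hX ▸ hM1ℒ
    have hcard' : ℒ'.ncard ≤ n := by
      have h1 : ℒ'.ncard ≤ (ℒ \ {L0, M1}).ncard + 1 := Set.ncard_insert_le _ _
      have h2 : (ℒ \ {L0, M1}).ncard = ℒ.ncard - 2 := by
        rw [Set.ncard_diff hL0M1 ((Set.finite_singleton _).insert _), Set.ncard_pair (Ne.symm hM1ne)]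
      have h3 : 2 ≤ ℒ.ncard := by
        have := Set.ncard_le_ncard hL0M1 hfin
        rwa [Set.ncard_pair (Ne.symm hM1ne)] at this
      omega
    have hfin' : ℒ'.Finite := ((hfin.subset Set.diff_subset).insert _)
    have hXneLm : ∀ X ∈ ℒ, X ≠ L0 → X ≠ Lm := by
      intro X hX hXne he
      have hd : Disjoint X L0 := hdisj hX hL0 hXne
      have : p.1 ∈ X := by rw [he, hLm]; exact Or.inl hp1
      exact Set.disjoint_left.mp hd this hp1
    have hdisj' : ℒ'.PairwiseDisjoint id := by
      rw [hℒ', Set.pairwiseDisjoint_insert]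
      refine ⟨hdisj.subset Set.diff_subset, fun X hX hne' => ?_⟩
      have hXnot : X ≠ L0 ∧ X ≠ M1 := by
        have := hX.2; simp only [Set.mem_insert_iff, Set.mem_singleton_iff] at this; tauto
      exact Set.disjoint_union_left.mpr
        ⟨hdisj hL0 hX.1 (Ne.symm hXnot.1), hdisj hM1ℒ hX.1 (Ne.symm hXnot.2)⟩
    have hconn' : ∀ X ∈ ℒ', G.ConnIn X := by
      rintro X (rfl | hX)
      · exact hmergedConn
      · exact hconn X hX.1
    have hnonE' : ∀ X ∈ ℒ', X.Nonempty := by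
      rintro X (rfl | hX)
      · exact ⟨p.1, Or.inl hp1⟩
      · exact hnonE X hX.1
    obtain ⟨L', hL'mem, hL'sub⟩ := ih ℒ' hfin' hcard' hdisj' hconn' hnonE'
      ⟨Lm, Set.mem_insert _ _⟩
    rcases hL'mem with rfl | hL'mem
    · -- L' is the merged set; then M1 is a leaf in ℒ
      refine ⟨M1, hM1ℒ, ?_⟩
      have hclaim : ∀ r ∈ crossPairs G ℒ M1, r.2 ∈ L0 := by
        rintro r ⟨hm, hz, hadj⟩
        obtain ⟨X, hXmem, hzX⟩ := hz
        have hXℒ : X ∈ ℒ := hXmem.1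
        have hXneM1 : X ≠ M1 := by simpa using hXmem.2
        by_contra hzL0
        have hXneL0 : X ≠ L0 := fun he => hzL0 (he ▸ hzX)
        have hXLm : X ≠ Lm := hXneLm X hXℒ hXneL0
        have hrmem : r ∈ crossPairs G ℒ' Lm :=
          ⟨Or.inr hm, ⟨X, ⟨Or.inr ⟨hXℒ, by simp [hXneL0, hXneM1]⟩, by simpa using hXLm⟩, hzX⟩,
            hadj⟩
        have hq2Union' : q.2 ∈ ⋃₀ (ℒ' \ {Lm}) := by
          obtain ⟨Y, hYmem, hzY⟩ := hq2
          have hYℒ : Y ∈ ℒ := hYmem.1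
          have hYneL0 : Y ≠ L0 := by simpa using hYmem.2
          have hYneM1 : Y ≠ M1 := fun he => hq2' (he ▸ hzY)
          have hYLm : Y ≠ Lm := hXneLm Y hYℒ hYneL0
          exact ⟨Y, ⟨Or.inr ⟨hYℒ, by simp [hYneL0, hYneM1]⟩, by simpa using hYLm⟩, hzY⟩
        have hqmem : q ∈ crossPairs G ℒ' Lm := ⟨Or.inl hq1, hq2Union', hq3⟩
        have hrq : r = q := hL'sub hrmem hqmem
        have : r.1 ∈ L0 := by rw [hrq]; exact hq1
        exact Set.disjoint_left.mp hdisj01 this hm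
      rintro r hr r' hr'
      obtain ⟨h1, h2⟩ := cross_unique ha hdisj01.symm (hconn _ hM1ℒ) (hconn _ hL0)
        hr.1 (hclaim r hr) hr'.1 (hclaim r' hr') hr.2.2 hr'.2.2
      exact Prod.ext h1 h2
    · -- L' is an untouched member
      have hL'ℒ : L' ∈ ℒ := hL'mem.1
      have hL'ne : L' ≠ L0 ∧ L' ≠ M1 := by
        have := hL'mem.2; simp only [Set.mem_insert_iff, Set.mem_singleton_iff] at this; tauto
      have hLmneL' : Lm ≠ L' := Ne.symm (hXneLm L' hL'ℒ hL'ne.1)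
      have hkey : ⋃₀ (ℒ' \ {L'}) = ⋃₀ (ℒ \ {L'}) := by
        ext z
        constructor
        · rintro ⟨X, ⟨hX, hXne⟩, hz⟩
          rcases hX with rfl | hX
          · rcases hz with hz | hz
            · exact ⟨L0, ⟨hL0, by simpa using (Ne.symm hL'ne.1)⟩, hz⟩
            · exact ⟨M1, ⟨hM1ℒ, by simpa using (Ne.symm hL'ne.2)⟩, hz⟩
          · exact ⟨X, ⟨hX.1, hXne⟩, hz⟩
        · rintro ⟨X, ⟨hX, hXne⟩, hz⟩
          by_cases hX0 : X = L0
          · exact ⟨Lm, ⟨Set.mem_insert _ _, by simpa using hLmneL'⟩,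
              Or.inl (hX0 ▸ hz)⟩
          by_cases hX1 : X = M1
          · exact ⟨Lm, ⟨Set.mem_insert _ _, by simpa using hLmneL'⟩,
              Or.inr (hX1 ▸ hz)⟩
          · exact ⟨X, ⟨Or.inr ⟨hX, by simp [hX0, hX1]⟩, hXne⟩, hz⟩
      have heq : crossPairs G ℒ L' = crossPairs G ℒ' L' := by
        unfold crossPairs; rw [hkey]
      exact ⟨L', hL'ℒ, heq ▸ hL'sub⟩

end SimpleGraph

namespace SimpleGraph
variable {V : Type*} {G : SimpleGraph V} [DecidableEq V]

lemma sUnion_decomp {ℒ : Set (Set V)} {L : Set V} (hL : L ∈ ℒ) :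
    ⋃₀ ℒ = L ∪ ⋃₀ (ℒ \ {L}) := by
  ext z
  constructor
  · rintro ⟨X, hX, hz⟩
    by_cases h : X = L
    · exact Or.inl (h ▸ hz)
    · exact Or.inr ⟨X, ⟨hX, by simpa using h⟩, hz⟩
  · rintro (hz | ⟨X, hX, hz⟩)
    · exact ⟨L, hL, hz⟩
    · exact ⟨X, hX.1, hz⟩

lemma cover_forces (ha : G.IsAcyclic) :
    ∀ (n : ℕ) (ℒ : Set (Set V)) (C S : Set V), ℒ.Finite → ℒ.ncard ≤ n →
      (∀ Q ∈ ℒ, ∃ (a b : V) (w : G.Walk a b), w.IsPath ∧ {x | x ∈ w.support} = Q ∧ a ∈ S) →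
      ℒ.PairwiseDisjoint id →
      (∀ z, z ∉ C → z ∉ ⋃₀ ℒ → ∀ y ∈ ⋃₀ ℒ, ¬G.Adj z y) →
      C ⊆ S →
      ∀ v ∈ ⋃₀ ℒ, G.Forced S v := by
  intro n
  induction n with
  | zero =>
    intro ℒ C S hfin hn _ _ _ _ v hv
    rw [(Set.ncard_eq_zero hfin).mp (Nat.le_zero.mp hn)] at hv
    simp at hv
  | succ n ih =>
    intro ℒ C S hfin hn hwalks hdisj hbound hCS v hv
    have hconnall : ∀ Q ∈ ℒ, G.ConnIn Q := fun Q hQ => by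
      obtain ⟨a, b, w, hp, hs, _⟩ := hwalks Q hQ
      exact connIn_of_isPathSet ⟨a, b, w, hp, hs⟩
    have hnonEall : ∀ Q ∈ ℒ, Q.Nonempty := fun Q hQ => by
      obtain ⟨a, b, w, hp, hs, _⟩ := hwalks Q hQ
      exact ⟨a, by rw [← hs]; exact w.start_mem_support⟩
    have hne : ℒ.Nonempty := by
      obtain ⟨X, hX, -⟩ := hv
      exact ⟨X, hX⟩
    obtain ⟨L, hLℒ, hLsub⟩ := leaf_exists ha ℒ.ncard ℒ hfin le_rfl hdisj hconnall hnonEall hne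
    obtain ⟨a, b, wL, hwLp, hwLs, haS⟩ := hwalks L hLℒ
    obtain ⟨x, hxsup, hxuniq⟩ : ∃ x, x ∈ wL.support ∧
        ∀ z y, z ∈ L → y ∈ ⋃₀ (ℒ \ {L}) → G.Adj z y → z = x := by
      rcases Set.eq_empty_or_nonempty (crossPairs G ℒ L) with hemp | ⟨⟨x, y⟩, hxy⟩
      · exact ⟨a, wL.start_mem_support, fun z y hz hy hadj =>
          absurd (show (z, y) ∈ crossPairs G ℒ L from ⟨hz, hy, hadj⟩)
            (by rw [hemp]; simp)⟩
      · refine ⟨x, ?_, fun z y' hz hy hadj => ?_⟩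
        · have hxL : x ∈ L := hxy.1
          rw [← hwLs] at hxL
          exact hxL
        · exact congrArg Prod.fst (hLsub (show (z, y') ∈ _ from ⟨hz, hy, hadj⟩) hxy)
    set seg := wL.takeUntil x hxsup with hseg
    set tl := wL.dropUntil x hxsup with htl
    have hsegsub : ∀ t, t ∈ seg.support → t ∈ wL.support :=
      fun t ht => Walk.support_takeUntil_subset _ _ ht
    have hxseg : x ∈ seg.support := Walk.end_mem_support _
    have hsupdecomp : ∀ t, t ∈ wL.support → t ∈ seg.support ∨ t ∈ tl.support := by
      intro t ht
      have h2 : t ∈ (seg.append tl).support := by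
        rw [hseg, htl, wL.take_spec hxsup]; exact ht
      rw [Walk.mem_support_append_iff] at h2
      exact h2
    have hLdecomp : ∀ t, t ∈ L ↔ t ∈ wL.support := fun t => by rw [← hwLs]; rfl
    -- Phase 1 : the initial segment gets forced
    have hphase1 : ∀ t ∈ seg.support, G.Forced S t := by
      refine force_along ha seg (hwLp.takeUntil _) (.init a haS) ?_
      intro z hz hzx y hadjzy
      by_cases hy1 : y ∈ seg.support
      · exact Or.inl hy1
      right
      have hzL : z ∈ L := (hLdecomp z).mpr (hsegsub z hz)
      by_cases hy2 : y ∈ wL.support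
      · exact (no_chord ha hwLp hxsup hz hzx hy2 hy1 hadjzy).elim
      by_cases hy3 : y ∈ C
      · exact .init y (hCS hy3)
      by_cases hy4 : y ∈ ⋃₀ (ℒ \ {L})
      · exact absurd (hxuniq z y hzL hy4 hadjzy) hzx
      · exfalso
        have hyout : y ∉ ⋃₀ ℒ := by
          rw [sUnion_decomp hLℒ]
          rintro (h | h)
          · exact hy2 ((hLdecomp y).mp h)
          · exact hy4 h
        exact hbound y hy3 hyout z ⟨L, hLℒ, hzL⟩ hadjzy.symm
    -- Phase 2 : the rest of the family gets forced
    have hphase2 : ∀ u ∈ ⋃₀ (ℒ \ {L}), G.Forced S u := by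
      have hcard : (ℒ \ {L}).ncard ≤ n := by
        have := Set.ncard_diff_singleton_lt_of_mem hLℒ hfin
        omega
      have hwalks' : ∀ Q ∈ ℒ \ {L}, ∃ (a b : V) (w : G.Walk a b), w.IsPath ∧
          {x | x ∈ w.support} = Q ∧ a ∈ S ∪ {t | t ∈ seg.support} := by
        intro Q hQ
        obtain ⟨a', b', w', h1, h2, h3⟩ := hwalks Q hQ.1
        exact ⟨a', b', w', h1, h2, Or.inl h3⟩
      have hbound' : ∀ z, z ∉ C ∪ {t | t ∈ seg.support} → z ∉ ⋃₀ (ℒ \ {L}) →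
          ∀ y ∈ ⋃₀ (ℒ \ {L}), ¬G.Adj z y := by
        intro z hz1 hz2 y hy hadj
        have hzC : z ∉ C := fun h => hz1 (Or.inl h)
        by_cases hzL : z ∈ L
        · have := hxuniq z y hzL hy hadj
          exact hz1 (Or.inr (by rw [this]; exact hxseg))
        · have hzout : z ∉ ⋃₀ ℒ := by
            rw [sUnion_decomp hLℒ]
            rintro (h | h)
            · exact hzL h
            · exact hz2 h
          obtain ⟨Y, hY, hyY⟩ := hy
          exact hbound z hzC hzout y ⟨Y, hY.1, hyY⟩ hadj
      have hCS' : C ∪ {t | t ∈ seg.support} ⊆ S ∪ {t | t ∈ seg.support} := by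
        rintro t (ht | ht)
        · exact Or.inl (hCS ht)
        · exact Or.inr ht
      have hmain := ih (ℒ \ {L}) (C ∪ {t | t ∈ seg.support}) (S ∪ {t | t ∈ seg.support})
        (hfin.subset Set.diff_subset) hcard hwalks' (hdisj.subset Set.diff_subset)
        hbound' hCS'
      intro u hu
      refine forced_trans ?_ (hmain u hu)
      rintro s (hs | hs)
      · exact .init s hs
      · exact hphase1 s hs
    -- Phase 3 : the tail of L gets forced
    have hphase3 : ∀ t ∈ tl.support, G.Forced S t := by
      refine force_along ha tl (hwLp.dropUntil _) (hphase1 x hxseg) ?_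
      intro z hz hzb y hadjzy
      by_cases hy1 : y ∈ tl.support
      · exact Or.inl hy1
      right
      have hzL : z ∈ L := (hLdecomp z).mpr (Walk.support_dropUntil_subset _ _ hz)
      by_cases hy2 : y ∈ seg.support
      · exact hphase1 y hy2
      by_cases hy3 : y ∈ C
      · exact .init y (hCS hy3)
      by_cases hy4 : y ∈ ⋃₀ (ℒ \ {L})
      · exact hphase2 y hy4
      · exfalso
        have hyw : y ∉ wL.support := fun h => (hsupdecomp y h).elim hy2 hy1
        have hyout : y ∉ ⋃₀ ℒ := by
          rw [sUnion_decomp hLℒ]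
          rintro (h | h)
          · exact hyw ((hLdecomp y).mp h)
          · exact hy4 h
        exact hbound y hy3 hyout z ⟨L, hLℒ, hzL⟩ hadjzy.symm
    rw [sUnion_decomp hLℒ] at hv
    rcases hv with hvL | hv'
    · rcases hsupdecomp v ((hLdecomp v).mp hvL) with h | h
      · exact hphase1 v h
      · exact hphase3 v h
    · exact hphase2 v hv'

end SimpleGraph

namespace SimpleGraph
variable {V : Type*} [Fintype V] {G : SimpleGraph V}

lemma exists_adj (hconn : G.Connected) (h2 : 2 ≤ Fintype.card V) (v : V) :
    ∃ y, G.Adj v y := by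
  obtain ⟨w, hw⟩ := Fintype.exists_ne_of_one_lt_card (by omega) v
  obtain ⟨p⟩ := hconn.preconnected v w
  cases p with
  | nil => exact absurd rfl hw.symm
  | cons h q => exact ⟨_, h⟩

lemma exists_TFS_of_cover [DecidableEq V] (hT : G.IsTree) (h2 : 2 ≤ Fintype.card V)
    {P : Set (Set V)} (hP : G.IsPathCover P) :
    ∃ S : Set V, G.IsTotalForcingSet S ∧ S.ncard ≤ 2 * P.ncard := by
  classical
  obtain ⟨hP1, hP2, hP3⟩ := hP
  choose fa fb fw h1 h2' using hP1
  set t : ∀ Q, Q ∈ P → V := fun Q hQ =>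
    if hnil : (fw Q hQ).Nil then Classical.choose (exists_adj hT.isConnected h2 (fa Q hQ))
    else (fw Q hQ).getVert 1 with ht
  have hadj : ∀ Q (hQ : Q ∈ P), G.Adj (fa Q hQ) (t Q hQ) := by
    intro Q hQ
    by_cases hnil : (fw Q hQ).Nil
    · rw [ht]; simp only [dif_pos hnil]
      exact Classical.choose_spec (exists_adj hT.isConnected h2 (fa Q hQ))
    · rw [ht]; simp only [dif_neg hnil]
      exact Walk.adj_snd hnil
  set g : Set V → Finset V := fun Q => if hQ : Q ∈ P then {fa Q hQ, t Q hQ} else ∅ with hg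
  set SF : Finset V := P.toFinset.biUnion g with hSF
  set S : Set V := ↑SF with hS
  have hmemS : ∀ Q (hQ : Q ∈ P), fa Q hQ ∈ S ∧ t Q hQ ∈ S := by
    intro Q hQ
    constructor <;>
    · refine Finset.mem_coe.mpr (Finset.mem_biUnion.mpr ⟨Q, Set.mem_toFinset.mpr hQ, ?_⟩)
      rw [hg]; simp only [dif_pos hQ]; simp
  have hzfs : G.IsZeroForcingSet S := by
    intro v
    refine cover_forces hT.IsAcyclic P.ncard P ∅ S P.toFinite le_rfl ?_ hP2 ?_
      (Set.empty_subset _) v (by rw [hP3]; trivial)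
    · intro Q hQ
      exact ⟨fa Q hQ, fb Q hQ, fw Q hQ, h1 Q hQ, h2' Q hQ, (hmemS Q hQ).1⟩
    · intro z _ hz2
      exact absurd (by rw [hP3]; trivial) hz2
  refine ⟨S, ⟨hzfs, ?_⟩, ?_⟩
  · intro v hv
    obtain ⟨Q, hQF, hvg⟩ := Finset.mem_biUnion.mp (Finset.mem_coe.mp hv)
    have hQ : Q ∈ P := Set.mem_toFinset.mp hQF
    rw [hg] at hvg; simp only [dif_pos hQ] at hvg
    rcases Finset.mem_insert.mp hvg with rfl | hvg
    · exact ⟨t Q hQ, (hmemS Q hQ).2, hadj Q hQ⟩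
    · rw [Finset.mem_singleton] at hvg
      subst hvg
      exact ⟨fa Q hQ, (hmemS Q hQ).1, (hadj Q hQ).symm⟩
  · have hc1 : S.ncard = SF.card := by rw [hS, Set.ncard_coe_finset]
    have hc2 : SF.card ≤ ∑ Q ∈ P.toFinset, (g Q).card := Finset.card_biUnion_le
    have hc3 : ∑ Q ∈ P.toFinset, (g Q).card ≤ P.toFinset.card * 2 := by
      have : ∀ Q ∈ P.toFinset, (g Q).card ≤ 2 := by
        intro Q hQF
        have hQ : Q ∈ P := Set.mem_toFinset.mp hQF
        rw [hg]; simp only [dif_pos hQ]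
        exact le_trans (Finset.card_insert_le _ _) (by simp)
      calc ∑ Q ∈ P.toFinset, (g Q).card ≤ ∑ _Q ∈ P.toFinset, 2 := Finset.sum_le_sum this
        _ = P.toFinset.card * 2 := by rw [Finset.sum_const, smul_eq_mul]
    have hc4 : P.toFinset.card = P.ncard := (Set.ncard_eq_toFinset_card' P).symm
    omega

end SimpleGraph

theorem stmt10 {V : Type*} [Fintype V] (T : SimpleGraph V) (hT : T.IsTree)
    (hn : 2 ≤ Fintype.card V) :
    T.pathCoverNumber + 1 ≤ T.totalForcingNumber ∧
      T.totalForcingNumber ≤ 2 * T.pathCoverNumber := by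
  classical
  have hNE : Nonempty V := Fintype.card_pos_iff.mp (by omega)
  -- the singleton cover
  have hP0 : T.IsPathCover ((fun v => ({v} : Set V)) '' Set.univ) := by
    refine ⟨?_, ?_, ?_⟩
    · rintro Q ⟨v, -, rfl⟩
      exact ⟨v, v, SimpleGraph.Walk.nil, by simp, by ext x; simp⟩
    · rintro Q ⟨v, -, rfl⟩ R ⟨w, -, rfl⟩ hne
      simp only [id]
      exact Set.disjoint_singleton.mpr (fun h => hne (by rw [h]))
    · rw [Set.eq_univ_iff_forall]
      exact fun v => ⟨{v}, ⟨v, trivial, rfl⟩, rfl⟩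
  have hpcne : {n | ∃ P : Set (Set V), T.IsPathCover P ∧ P.ncard = n}.Nonempty :=
    ⟨_, _, hP0, rfl⟩
  obtain ⟨Pmin, hPmin, hPcard⟩ := Nat.sInf_mem hpcne
  -- upper bound
  obtain ⟨S, hS, hScard⟩ := SimpleGraph.exists_TFS_of_cover hT hn hPmin
  have hupper : T.totalForcingNumber ≤ 2 * T.pathCoverNumber := by
    have hle : T.totalForcingNumber ≤ S.ncard := Nat.sInf_le ⟨S, hS, rfl⟩
    have : T.pathCoverNumber = Pmin.ncard := hPcard.symm
    omega
  -- lower bound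
  have htfsne : {n | ∃ S : Set V, T.IsTotalForcingSet S ∧ S.ncard = n}.Nonempty := by
    refine ⟨_, Set.univ, ⟨fun v => .init v trivial, fun v _ => ?_⟩, rfl⟩
    obtain ⟨y, hy⟩ := SimpleGraph.exists_adj hT.isConnected hn v
    exact ⟨y, trivial, hy⟩
  obtain ⟨S₀, hS₀, hS₀card⟩ := Nat.sInf_mem htfsne
  obtain ⟨P₁, hP₁, hP₁card⟩ := SimpleGraph.exists_cover_of_totalForcingSet hS₀
  have hpc : T.pathCoverNumber ≤ P₁.ncard := Nat.sInf_le ⟨P₁, hP₁, rfl⟩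
  have hlower : T.pathCoverNumber + 1 ≤ T.totalForcingNumber := by
    have : S₀.ncard = T.totalForcingNumber := hS₀card
    omega
  exact ⟨hlower, hupper⟩
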